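/- Let m ≥ 1 and let Q ∈ ℂ[x_1, …, x_m] be any polynomial satisfying Q(t_1², …, t_m²) = ∏_{ε ∈ {−1,1}^m} (1 + ε_1 t_1 + ⋯ + ε_m t_m) in ℂ[t_1, …, t_m]. Then Q is irreducible in ℂ[x_1, …, x_m]. In other words, the expanded polynomial ∏_{ε_i ∈ {−1,1}} (1 + ε_1√(x_1) + ⋯ + ε_m√(x_m)) is irreducible in ℂ[x_1, …, x_m]. -/

import Mathlib

open MvPolynomial

/-- The sign `±1 ∈ ℂ` attached to a boolean. -/
noncomputable def signVal (b : Bool) : ℂ := if b then 1 else -1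

namespace LauAux

lemma signVal_mul (a b : Bool) : signVal a * signVal b = signVal (a == b) := by
  cases a <;> cases b <;> simp [signVal]

lemma signVal_sq (a : Bool) : signVal a * signVal a = 1 := by cases a <;> simp [signVal]

lemma signVal_inj {a b : Bool} (h : signVal a = signVal b) : a = b := by
  cases a <;> cases b
  · rfl
  · norm_num [signVal] at h
  · norm_num [signVal] at h
  · rfl

noncomputable def L (m : ℕ) (ε : Fin m → Bool) : MvPolynomial (Fin m) ℂ :=
  1 + ∑ i, C (signVal (ε i)) * X i

lemma coeff_zero_L (m : ℕ) (ε : Fin m → Bool) : coeff 0 (L m ε) = 1 := by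
  simp [L, coeff_sum, coeff_C_mul]

lemma coeff_single_L (m : ℕ) (ε : Fin m → Bool) (j : Fin m) :
    coeff (Finsupp.single j 1) (L m ε) = signVal (ε j) := by
  rw [L, coeff_add, coeff_sum]
  rw [Finset.sum_eq_single j]
  · simp [coeff_C_mul, coeff_X', coeff_one, eq_comm, Finsupp.single_eq_zero]
  · intro i _ hij
    simp [coeff_C_mul, coeff_X', Finsupp.single_left_injective one_ne_zero |>.ne hij]
  · simp

lemma L_ne_zero (m : ℕ) (ε : Fin m → Bool) : L m ε ≠ 0 := fun h => by
  simpa [h] using coeff_zero_L m ε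

lemma L_inj {m : ℕ} {ε δ : Fin m → Bool} (h : L m ε = L m δ) : ε = δ := by
  funext j
  exact signVal_inj (by rw [← coeff_single_L m ε j, ← coeff_single_L m δ j, h])

lemma eq_C_of_isUnit : ∀ (n : ℕ) (p : MvPolynomial (Fin n) ℂ), IsUnit p → ∃ c : ℂ, p = C c := by
  intro n
  induction n with
  | zero => intro p _; exact ⟨p.coeff 0, (MvPolynomial.eq_C_of_isEmpty p)⟩
  | succ n ih =>
    intro p hp
    set e := MvPolynomial.finSuccEquiv ℂ n
    have hq : IsUnit (e p) := hp.map e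
    have hdeg : (e p).degree = 0 := Polynomial.degree_eq_zero_of_isUnit hq
    have hqc : e p = Polynomial.C ((e p).coeff 0) :=
      Polynomial.eq_C_of_degree_le_zero hdeg.le
    have hu : IsUnit ((e p).coeff 0) := by
      rw [hqc] at hq; exact Polynomial.isUnit_C.mp hq
    obtain ⟨c, hc⟩ := ih _ hu
    refine ⟨c, ?_⟩
    have h2 := congrArg e.symm hqc
    rw [AlgEquiv.symm_apply_apply] at h2
    rw [h2, hc]
    exact congrFun (congrArg (fun f : ℂ →+* MvPolynomial (Fin (n+1)) ℂ => (f : ℂ → _))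
      (MvPolynomial.finSuccEquiv_comp_C_eq_C n)) c

lemma prime_X0 (n : ℕ) : Prime (X 0 : MvPolynomial (Fin (n+1)) ℂ) := by
  rw [← MulEquiv.prime_iff (MvPolynomial.finSuccEquiv ℂ n).toRingEquiv.toMulEquiv]
  have : (MvPolynomial.finSuccEquiv ℂ n) (X 0) = Polynomial.X := finSuccEquiv_X_zero
  rw [show ((MvPolynomial.finSuccEquiv ℂ n).toRingEquiv.toMulEquiv (X 0)) = Polynomial.X from this]
  exact Polynomial.prime_X

/-- The sign-flip algebra automorphism `X i ↦ signVal (ν i) • X i`. -/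
noncomputable def flip (m : ℕ) (ν : Fin m → Bool) :
    MvPolynomial (Fin m) ℂ ≃ₐ[ℂ] MvPolynomial (Fin m) ℂ :=
  AlgEquiv.ofAlgHom (aeval fun i => C (signVal (ν i)) * X i)
    (aeval fun i => C (signVal (ν i)) * X i)
    (by
      apply MvPolynomial.algHom_ext; intro i
      simp only [AlgHom.comp_apply, aeval_X, map_mul, aeval_C, AlgHom.id_apply,
        MvPolynomial.algebraMap_eq]
      rw [← mul_assoc, ← C_mul, signVal_sq, C_1, one_mul])
    (by
      apply MvPolynomial.algHom_ext; intro i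
      simp only [AlgHom.comp_apply, aeval_X, map_mul, aeval_C, AlgHom.id_apply,
        MvPolynomial.algebraMap_eq]
      rw [← mul_assoc, ← C_mul, signVal_sq, C_1, one_mul])

lemma flip_apply (m : ℕ) (ν : Fin m → Bool) (p : MvPolynomial (Fin m) ℂ) :
    flip m ν p = aeval (fun i => C (signVal (ν i)) * X i) p := rfl

lemma flip_L (m : ℕ) (ν ε : Fin m → Bool) :
    flip m ν (L m ε) = L m (fun i => ε i == ν i) := by
  rw [flip_apply, L, L, map_add, map_one, map_sum]
  congr 1
  apply Finset.sum_congr rfl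
  intro i _
  rw [map_mul, aeval_X, aeval_C, MvPolynomial.algebraMap_eq, ← mul_assoc, ← C_mul, signVal_mul]

lemma flip_sq (m : ℕ) (ν : Fin m → Bool) (p : MvPolynomial (Fin m) ℂ) :
    flip m ν (aeval (fun i : Fin m => (X i : MvPolynomial (Fin m) ℂ) ^ 2) p) =
      aeval (fun i : Fin m => (X i : MvPolynomial (Fin m) ℂ) ^ 2) p := by
  have h : (flip m ν).toAlgHom.comp
      (aeval (fun i : Fin m => (X i : MvPolynomial (Fin m) ℂ) ^ 2)) =
      aeval (fun i : Fin m => (X i : MvPolynomial (Fin m) ℂ) ^ 2) := by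
    apply MvPolynomial.algHom_ext; intro i
    simp only [AlgHom.comp_apply, aeval_X, AlgEquiv.toAlgHom_eq_coe, AlgHom.coe_coe]
    rw [map_pow]
    change (aeval (fun i => C (signVal (ν i)) * X i) (X i)) ^ 2 = _
    rw [aeval_X, mul_pow, ← C_pow, pow_two, signVal_sq, C_1, one_mul]
  exact congrFun (congrArg (fun f : _ →ₐ[ℂ] _ => (f : _ → _)) h) p

/-- Forward substitution: `X 0 ↦ L ε`. -/
noncomputable def fwd (n : ℕ) (ε : Fin (n+1) → Bool) : Fin (n+1) → MvPolynomial (Fin (n+1)) ℂ :=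
  fun i => if i = 0 then L (n+1) ε else X i

/-- Backward substitution. -/
noncomputable def bwd (n : ℕ) (ε : Fin (n+1) → Bool) : Fin (n+1) → MvPolynomial (Fin (n+1)) ℂ :=
  fun i => if i = 0 then
      C (signVal (ε 0)) * (X 0 - (1 + ∑ k ∈ Finset.univ.erase 0, C (signVal (ε k)) * X k))
    else X i

lemma fwd_zero (n : ℕ) (ε : Fin (n+1) → Bool) : fwd n ε 0 = L (n+1) ε := if_pos rfl
lemma fwd_ne (n : ℕ) (ε : Fin (n+1) → Bool) {i : Fin (n+1)} (h : i ≠ 0) : fwd n ε i = X i :=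
  if_neg h
lemma bwd_zero (n : ℕ) (ε : Fin (n+1) → Bool) : bwd n ε 0 =
    C (signVal (ε 0)) * (X 0 - (1 + ∑ k ∈ Finset.univ.erase 0, C (signVal (ε k)) * X k)) :=
  if_pos rfl
lemma bwd_ne (n : ℕ) (ε : Fin (n+1) → Bool) {i : Fin (n+1)} (h : i ≠ 0) : bwd n ε i = X i :=
  if_neg h

lemma hsqC (n : ℕ) (b : Bool) :
    C (signVal b) * C (signVal b) = (1 : MvPolynomial (Fin (n+1)) ℂ) := by
  rw [← C_mul, signVal_sq, C_1]

/-- The affine substitution sending `X 0` to `L ε` (and fixing other variables). -/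
noncomputable def aff (n : ℕ) (ε : Fin (n+1) → Bool) :
    MvPolynomial (Fin (n+1)) ℂ ≃ₐ[ℂ] MvPolynomial (Fin (n+1)) ℂ :=
  AlgEquiv.ofAlgHom (aeval (fwd n ε)) (aeval (bwd n ε))
    (by
      apply MvPolynomial.algHom_ext; intro i
      by_cases h : i = 0
      · subst h
        rw [AlgHom.comp_apply, aeval_X, bwd_zero, map_mul, map_sub, map_add, map_one, map_sum,
          aeval_C, MvPolynomial.algebraMap_eq, aeval_X, fwd_zero, AlgHom.id_apply]
        have hs : ∀ k ∈ Finset.univ.erase (0 : Fin (n+1)),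
            (aeval (fwd n ε)) (C (signVal (ε k)) * X k) = C (signVal (ε k)) * X k := by
          intro k hk
          rw [map_mul, aeval_X, fwd_ne n ε (Finset.ne_of_mem_erase hk), aeval_C,
            MvPolynomial.algebraMap_eq]
        rw [Finset.sum_congr rfl hs]
        have hL : L (n+1) ε = 1 + (C (signVal (ε 0)) * X 0 +
            ∑ k ∈ Finset.univ.erase 0, C (signVal (ε k)) * X k) := by
          rw [L, ← Finset.add_sum_erase _ (fun k => C (signVal (ε k)) * X k)
            (Finset.mem_univ (0 : Fin (n+1)))]
        rw [hL]
        linear_combination (X 0 : MvPolynomial (Fin (n+1)) ℂ) * hsqC n (ε 0)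
      · rw [AlgHom.comp_apply, aeval_X, bwd_ne n ε h, aeval_X, fwd_ne n ε h, AlgHom.id_apply])
    (by
      apply MvPolynomial.algHom_ext; intro i
      by_cases h : i = 0
      · subst h
        rw [AlgHom.comp_apply, aeval_X, fwd_zero, L, map_add, map_one, map_sum,
          ← Finset.add_sum_erase _ (fun k => (aeval (bwd n ε)) (C (signVal (ε k)) * X k))
            (Finset.mem_univ (0 : Fin (n+1)))]
        have hs : ∀ k ∈ Finset.univ.erase (0 : Fin (n+1)),
            (aeval (bwd n ε)) (C (signVal (ε k)) * X k) = C (signVal (ε k)) * X k := by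
          intro k hk
          rw [map_mul, aeval_X, bwd_ne n ε (Finset.ne_of_mem_erase hk), aeval_C,
            MvPolynomial.algebraMap_eq]
        rw [Finset.sum_congr rfl hs, map_mul, aeval_X, bwd_zero, aeval_C,
          MvPolynomial.algebraMap_eq, AlgHom.id_apply]
        linear_combination ((X 0 : MvPolynomial (Fin (n+1)) ℂ) - 1 -
          ∑ k ∈ Finset.univ.erase 0, C (signVal (ε k)) * X k) * hsqC n (ε 0)
      · rw [AlgHom.comp_apply, aeval_X, fwd_ne n ε h, aeval_X, bwd_ne n ε h, AlgHom.id_apply])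

lemma prime_L (n : ℕ) (ε : Fin (n+1) → Bool) : Prime (L (n+1) ε) := by
  have h : aff n ε (X 0) = L (n+1) ε := by
    show (aeval (fwd n ε)) (X 0) = _
    rw [aeval_X, fwd_zero]
  rw [← h]
  exact (MulEquiv.prime_iff (aff n ε).toRingEquiv.toMulEquiv).mpr (prime_X0 n)


lemma phi_inj (m : ℕ) :
    Function.Injective (aeval (R := ℂ) fun i : Fin m => (X i : MvPolynomial (Fin m) ℂ) ^ 2) := by
  rw [injective_iff_map_eq_zero]
  intro p hp
  have key : ∀ x : Fin m → ℂ, eval x p = 0 := by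
    intro x
    choose y hy using fun i => IsAlgClosed.exists_pow_nat_eq (k := ℂ) (x i) (n := 2) two_pos
    have h1 : (aeval y) ((aeval fun i : Fin m => (X i : MvPolynomial (Fin m) ℂ) ^ 2) p)
        = (aeval fun i => (aeval y) ((X i : MvPolynomial (Fin m) ℂ) ^ 2)) p :=
      comp_aeval_apply _ _ _
    have h2 : (fun i => (aeval y) ((X i : MvPolynomial (Fin m) ℂ) ^ 2)) = x := by
      funext i; rw [map_pow, aeval_X, hy]
    have h3 : ∀ (z : Fin m → ℂ) (q : MvPolynomial (Fin m) ℂ), (aeval z) q = eval z q := by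
      intro z q
      rw [← coe_aeval_eq_eval]
      rfl
    rw [hp, map_zero, h2, h3] at h1
    exact h1.symm
  have := MvPolynomial.funext (p := p) (q := 0) (fun x => by rw [key x, map_zero])
  exact this

lemma exists_L_dvd {m : ℕ} (hL : ∀ γ : Fin m → Bool, Prime (L m γ))
    (s : Finset (Fin m → Bool)) (D E : MvPolynomial (Fin m) ℂ)
    (hD : ¬ IsUnit D) (h : (∏ ε ∈ s, L m ε) = D * E) : ∃ ε ∈ s, L m ε ∣ D := by
  induction s using Finset.induction_on generalizing D E with
  | empty =>
    exact absurd (isUnit_of_dvd_one ⟨E, by rw [← h, Finset.prod_empty]⟩) hD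
  | @insert ε s hε ih =>
    rw [Finset.prod_insert hε] at h
    rcases (hL ε).2.2 D E ⟨∏ δ ∈ s, L _ δ, h.symm⟩ with hD' | hE'
    · exact ⟨ε, Finset.mem_insert_self _ _, hD'⟩
    · obtain ⟨E', rfl⟩ := hE'
      have h2 : (∏ δ ∈ s, L _ δ) = D * E' :=
        mul_left_cancel₀ (L_ne_zero _ ε) (by linear_combination h)
      obtain ⟨ε', hε', hdvd⟩ := ih D E' hD h2
      exact ⟨ε', Finset.mem_insert_of_mem hε', hdvd⟩

lemma eq_of_L_dvd {m : ℕ} {δ ε : Fin m → Bool} (hL : ∀ γ : Fin m → Bool, Prime (L m γ))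
    (h : L m δ ∣ L m ε) : δ = ε := by
  obtain ⟨c, hc⟩ := h
  rcases (hL ε).irreducible.isUnit_or_isUnit hc with h1 | h2
  · exact absurd h1 (hL δ).not_unit
  · obtain ⟨u, rfl⟩ := eq_C_of_isUnit _ c h2
    rw [mul_comm] at hc
    have h0 : (1 : ℂ) = u * 1 := by
      have := congrArg (coeff 0) hc
      rwa [coeff_zero_L, coeff_C_mul, coeff_zero_L] at this
    have hu : u = 1 := by rw [mul_one] at h0; exact h0.symm
    rw [hu, C_1, one_mul] at hc
    exact (L_inj hc).symm

end LauAux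

/-- any polynomial `Q ∈ ℂ[x_1, …, x_m]` with
`Q(t_1^2, …, t_m^2) = ∏_ε (1 + ε_1 t_1 + ⋯ + ε_m t_m)` is irreducible in
`ℂ[x_1, …, x_m]`; i.e. the expanded polynomial
`∏_ε (1 + ε_1 √x_1 + ⋯ + ε_m √x_m)` is irreducible. -/
theorem lauricella_sing_polynomial_irreducible (m : ℕ) (hm : 1 ≤ m)
    (Q : MvPolynomial (Fin m) ℂ)
    (hQ : aeval (fun i : Fin m => (X i : MvPolynomial (Fin m) ℂ) ^ 2) Q =
      ∏ ε : Fin m → Bool, (1 + ∑ i, C (signVal (ε i)) * X i)) :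
    Irreducible Q := by
  obtain ⟨n, rfl⟩ : ∃ n, m = n + 1 := ⟨m - 1, (Nat.succ_pred_eq_of_pos hm).symm⟩
  set φ := (aeval (R := ℂ) fun i : Fin (n+1) => (X i : MvPolynomial (Fin (n+1)) ℂ) ^ 2) with hφ
  have hL : ∀ γ : Fin (n+1) → Bool, Prime (LauAux.L (n+1) γ) := LauAux.prime_L n
  have hP : φ Q = ∏ ε : Fin (n+1) → Bool, LauAux.L (n+1) ε := by
    rw [hφ, hQ]; rfl
  constructor
  · intro hQu
    have hu : IsUnit (φ Q) := hQu.map φ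
    rw [hP] at hu
    have hd : LauAux.L (n+1) (fun _ => true) ∣ ∏ ε : Fin (n+1) → Bool, LauAux.L (n+1) ε :=
      Finset.dvd_prod_of_mem _ (Finset.mem_univ _)
    exact (hL _).not_unit (isUnit_of_dvd_unit hd hu)
  · intro A B hab
    by_contra hcon
    push_neg at hcon
    obtain ⟨hA, hB⟩ := hcon
    have hABP : (∏ ε : Fin (n+1) → Bool, LauAux.L (n+1) ε) = φ A * φ B := by
      rw [← map_mul, ← hab, hP]
    have hnu : ∀ p : MvPolynomial (Fin (n+1)) ℂ, ¬ IsUnit p → ¬ IsUnit (φ p) := by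
      intro p hp hu
      obtain ⟨c, hc⟩ := LauAux.eq_C_of_isUnit _ _ hu
      have h2 : φ (C c) = C c := by
        rw [hφ, aeval_C, MvPolynomial.algebraMap_eq]
      have h3 : p = C c := by
        apply LauAux.phi_inj (n+1)
        rw [← hφ, hc, h2]
      exact hp (h3 ▸ (hc ▸ hu))
    obtain ⟨ε, _, hdA⟩ := LauAux.exists_L_dvd hL Finset.univ (φ A) (φ B) (hnu A hA) hABP
    obtain ⟨δ, _, hdB⟩ := LauAux.exists_L_dvd hL Finset.univ (φ B) (φ A) (hnu B hB)
      (by rw [hABP]; ring)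
    have hdA' : LauAux.L (n+1) δ ∣ φ A := by
      have h1 : LauAux.flip (n+1) (fun i => (ε i == δ i)) (LauAux.L (n+1) ε) ∣
          LauAux.flip (n+1) (fun i => (ε i == δ i)) (φ A) := map_dvd _ hdA
      have h2 : LauAux.flip (n+1) (fun i => (ε i == δ i)) (φ A) = φ A := by
        rw [hφ]; exact LauAux.flip_sq (n+1) _ A
      rw [LauAux.flip_L, h2] at h1
      have h3 : (fun i => ε i == (ε i == δ i)) = δ := by
        funext i; cases ε i <;> cases δ i <;> rfl
      rwa [h3] at h1
    have hsq : LauAux.L (n+1) δ * LauAux.L (n+1) δ ∣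
        ∏ ε : Fin (n+1) → Bool, LauAux.L (n+1) ε := by
      rw [hABP]; exact mul_dvd_mul hdA' hdB
    rw [← Finset.mul_prod_erase Finset.univ _ (Finset.mem_univ δ)] at hsq
    obtain ⟨R, hR⟩ := hsq
    have hR' : (∏ ε ∈ Finset.univ.erase δ, LauAux.L (n+1) ε) = LauAux.L (n+1) δ * R :=
      mul_left_cancel₀ (LauAux.L_ne_zero _ δ) (by linear_combination hR)
    obtain ⟨ε', hε', hd'⟩ := (hL δ).exists_mem_finset_dvd ⟨R, hR'⟩
    exact (Finset.ne_of_mem_erase hε') (LauAux.eq_of_L_dvd hL hd').symm
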